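/- Let Γ be an anti-unitary involution on a complex Hilbert space 𝔥, P a basis projection (P + ΓPΓ = 1) with range 𝔭, and 𝔮 a closed Γ-invariant subspace such that 𝔭 and 𝔮 are in generic position. Define the anti-linear operators β, α on 𝔭 by gra β := {(Pq, PΓq) : q ∈ 𝔮} and gra α := {(Pq^⊥, −PΓq^⊥) : q^⊥ ∈ 𝔮^⊥}. Then α and β are anti-linear, injective, closed, with dense domains and images dom α = ima α = P(𝔮^⊥), dom β = ima β = P𝔮; moreover α² = id on P(𝔮^⊥), β² = id on P𝔮, and α = β*. -/

import Mathlib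

open scoped ComplexInnerProductSpace

/-- Lemma 4.8 (`Alpha`): the anti-linear operators `β` and `α` on `𝔭` with graphs
`gra β = {(Pq, PΓq) : q ∈ 𝔮}` and `gra α = {(Pq⊥, −PΓq⊥) : q⊥ ∈ 𝔮ᗮ}` are anti-linear,
injective, closed, with dense domains and images `dom α = ima α = P𝔮ᗮ`,
`dom β = ima β = P𝔮`; moreover `α² = id`, `β² = id` on the respective domains and `α = β*`. -/
theorem alpha_beta_properties
    {E : Type*} [NormedAddCommGroup E] [InnerProductSpace ℂ E] [CompleteSpace E]
    (Γ : E → E)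
    (hΓ_add : ∀ x y, Γ (x + y) = Γ x + Γ y)
    (hΓ_smul : ∀ (c : ℂ) (x : E), Γ (c • x) = (starRingEnd ℂ) c • Γ x)
    (hΓ_inner : ∀ f h : E, ⟪Γ f, Γ h⟫ = ⟪h, f⟫)
    (hΓ_inv : ∀ x, Γ (Γ x) = x)
    (P : E →L[ℂ] E) (hP_proj : P ∘L P = P) (hP_sa : IsSelfAdjoint P)
    (hP_basis : ∀ x, P x + Γ (P (Γ x)) = x)
    (Q : E →L[ℂ] E) (hQ_proj : Q ∘L Q = Q) (hQ_sa : IsSelfAdjoint Q)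
    (hQΓ : ∀ x, Q (Γ x) = Γ (Q x))
    (hgen1 : LinearMap.range (P : E →ₗ[ℂ] E) ⊓ LinearMap.range (Q : E →ₗ[ℂ] E) = ⊥)
    (hgen2 : LinearMap.range (P : E →ₗ[ℂ] E) ⊓ (LinearMap.range (Q : E →ₗ[ℂ] E))ᗮ = ⊥)
    (hgen3 : (LinearMap.range (P : E →ₗ[ℂ] E))ᗮ ⊓ LinearMap.range (Q : E →ₗ[ℂ] E) = ⊥)
    (hgen4 : (LinearMap.range (P : E →ₗ[ℂ] E))ᗮ ⊓ (LinearMap.range (Q : E →ₗ[ℂ] E))ᗮ = ⊥)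
    (graβ graα : Set (E × E))
    (hβ : graβ = {z : E × E | ∃ q ∈ LinearMap.range (Q : E →ₗ[ℂ] E), z = (P q, P (Γ q))})
    (hα : graα = {z : E × E | ∃ q' ∈ (LinearMap.range (Q : E →ₗ[ℂ] E))ᗮ, z = (P q', -(P (Γ q')))}) :
    -- graphs of (single-valued) injective maps
    (∀ z ∈ graβ, ∀ w ∈ graβ, z.1 = w.1 → z.2 = w.2) ∧
    (∀ z ∈ graβ, ∀ w ∈ graβ, z.2 = w.2 → z.1 = w.1) ∧
    (∀ z ∈ graα, ∀ w ∈ graα, z.1 = w.1 → z.2 = w.2) ∧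
    (∀ z ∈ graα, ∀ w ∈ graα, z.2 = w.2 → z.1 = w.1) ∧
    -- anti-linearity
    (∀ z ∈ graβ, ∀ w ∈ graβ, z + w ∈ graβ) ∧
    (∀ z ∈ graβ, ∀ c : ℂ, (c • z.1, (starRingEnd ℂ) c • z.2) ∈ graβ) ∧
    (∀ z ∈ graα, ∀ w ∈ graα, z + w ∈ graα) ∧
    (∀ z ∈ graα, ∀ c : ℂ, (c • z.1, (starRingEnd ℂ) c • z.2) ∈ graα) ∧
    -- closedness
    IsClosed graβ ∧ IsClosed graα ∧
    -- domains and images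
    Prod.fst '' graβ = P '' (LinearMap.range (Q : E →ₗ[ℂ] E) : Set E) ∧
    Prod.snd '' graβ = P '' (LinearMap.range (Q : E →ₗ[ℂ] E) : Set E) ∧
    Prod.fst '' graα = P '' ((LinearMap.range (Q : E →ₗ[ℂ] E))ᗮ : Set E) ∧
    Prod.snd '' graα = P '' ((LinearMap.range (Q : E →ₗ[ℂ] E))ᗮ : Set E) ∧
    -- density of the domains in 𝔭
    closure (P '' (LinearMap.range (Q : E →ₗ[ℂ] E) : Set E)) = (LinearMap.range (P : E →ₗ[ℂ] E) : Set E) ∧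
    closure (P '' ((LinearMap.range (Q : E →ₗ[ℂ] E))ᗮ : Set E)) = (LinearMap.range (P : E →ₗ[ℂ] E) : Set E) ∧
    -- β² = id and α² = id on the respective domains
    (∀ z ∈ graβ, (z.2, z.1) ∈ graβ) ∧
    (∀ z ∈ graα, (z.2, z.1) ∈ graα) ∧
    -- α = β* (adjoint of the anti-linear operator β)
    graα = {z : E × E | z.1 ∈ LinearMap.range (P : E →ₗ[ℂ] E) ∧ z.2 ∈ LinearMap.range (P : E →ₗ[ℂ] E) ∧
      ∀ w ∈ graβ, ⟪z.1, w.2⟫ = ⟪w.1, z.2⟫} := by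
  have hΓ0 : Γ 0 = 0 := by simpa using hΓ_smul 0 0
  have hΓ_neg : ∀ x, Γ (-x) = -Γ x := fun x => by simpa using hΓ_smul (-1) x
  have hΓ_sub : ∀ x y, Γ (x - y) = Γ x - Γ y := fun x y => by
    rw [sub_eq_add_neg, hΓ_add, hΓ_neg, ← sub_eq_add_neg]
  have hΓ_norm : ∀ x, ‖Γ x‖ = ‖x‖ := by
    intro x
    have h : ‖Γ x‖ ^ 2 = ‖x‖ ^ 2 := by
      rw [norm_sq_eq_re_inner (𝕜 := ℂ), norm_sq_eq_re_inner (𝕜 := ℂ), hΓ_inner x x]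
    nlinarith [norm_nonneg (Γ x), norm_nonneg x]
  have hΓ_cont : Continuous Γ := by
    have : Isometry Γ := Isometry.of_dist_eq fun x y => by
      rw [dist_eq_norm, dist_eq_norm, ← hΓ_sub]; exact hΓ_norm _
    exact this.continuous
  have hPP : ∀ x, P (P x) = P x := fun x => by
    have := ContinuousLinearMap.ext_iff.mp hP_proj x
    simpa using this
  have hQQ : ∀ x, Q (Q x) = Q x := fun x => by
    have := ContinuousLinearMap.ext_iff.mp hQ_proj x
    simpa using this
  have hPsym : ∀ x y, ⟪P x, y⟫ = ⟪x, P y⟫ := fun x y => hP_sa.isSymmetric x y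
  have hQsym : ∀ x y, ⟪Q x, y⟫ = ⟪x, Q y⟫ := fun x y => hQ_sa.isSymmetric x y
  have mem_ranP : ∀ x, x ∈ LinearMap.range (P : E →ₗ[ℂ] E) ↔ P x = x := by
    intro x
    constructor
    · rintro ⟨y, rfl⟩; exact hPP y
    · intro h; exact ⟨x, h⟩
  have mem_ranQ : ∀ x, x ∈ LinearMap.range (Q : E →ₗ[ℂ] E) ↔ Q x = x := by
    intro x
    constructor
    · rintro ⟨y, rfl⟩; exact hQQ y
    · intro h; exact ⟨x, h⟩
  have mem_Pperp : ∀ x, x ∈ (LinearMap.range (P : E →ₗ[ℂ] E))ᗮ ↔ P x = 0 := by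
    intro x
    constructor
    · intro h
      have h0 : ⟪P x, x⟫ = 0 := (Submodule.mem_orthogonal _ _).mp h (P x) ⟨x, rfl⟩
      have h1 : ⟪P x, P x⟫ = 0 := by
        rw [hPsym, hPP, ← inner_conj_symm, h0, map_zero]
      exact inner_self_eq_zero.mp h1
    · intro h
      rw [Submodule.mem_orthogonal]
      rintro u ⟨y, rfl⟩
      rw [show (P : E →ₗ[ℂ] E) y = P y from rfl, hPsym, h, inner_zero_right]
  have mem_Qperp : ∀ x, x ∈ (LinearMap.range (Q : E →ₗ[ℂ] E))ᗮ ↔ Q x = 0 := by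
    intro x
    constructor
    · intro h
      have h0 : ⟪Q x, x⟫ = 0 := (Submodule.mem_orthogonal _ _).mp h (Q x) ⟨x, rfl⟩
      have h1 : ⟪Q x, Q x⟫ = 0 := by
        rw [hQsym, hQQ, ← inner_conj_symm, h0, map_zero]
      exact inner_self_eq_zero.mp h1
    · intro h
      rw [Submodule.mem_orthogonal]
      rintro u ⟨y, rfl⟩
      rw [show (Q : E →ₗ[ℂ] E) y = Q y from rfl, hQsym, h, inner_zero_right]
  have hΓPΓ : ∀ x, Γ (P (Γ x)) = x - P x := fun x => eq_sub_of_add_eq' (hP_basis x)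
  have hPΓ0 : ∀ x, P x = x → P (Γ x) = 0 := by
    intro x hx
    have h := hP_basis (Γ x)
    rw [hΓ_inv, hx] at h
    exact add_eq_right.mp h
  -- generic position, pointwise
  have hgen1' : ∀ x, P x = x → Q x = x → x = 0 := by
    intro x hp hq
    have hx : x ∈ LinearMap.range (P : E →ₗ[ℂ] E) ⊓ LinearMap.range (Q : E →ₗ[ℂ] E) :=
      Submodule.mem_inf.mpr ⟨(mem_ranP x).mpr hp, (mem_ranQ x).mpr hq⟩
    rw [hgen1] at hx
    simpa using hx
  have hgen2' : ∀ x, P x = x → Q x = 0 → x = 0 := by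
    intro x hp hq
    have hx : x ∈ LinearMap.range (P : E →ₗ[ℂ] E) ⊓ (LinearMap.range (Q : E →ₗ[ℂ] E))ᗮ :=
      Submodule.mem_inf.mpr ⟨(mem_ranP x).mpr hp, (mem_Qperp x).mpr hq⟩
    rw [hgen2] at hx
    simpa using hx
  have hgen3' : ∀ x, P x = 0 → Q x = x → x = 0 := by
    intro x hp hq
    have hx : x ∈ (LinearMap.range (P : E →ₗ[ℂ] E))ᗮ ⊓ LinearMap.range (Q : E →ₗ[ℂ] E) :=
      Submodule.mem_inf.mpr ⟨(mem_Pperp x).mpr hp, (mem_ranQ x).mpr hq⟩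
    rw [hgen3] at hx
    simpa using hx
  have hgen4' : ∀ x, P x = 0 → Q x = 0 → x = 0 := by
    intro x hp hq
    have hx : x ∈ (LinearMap.range (P : E →ₗ[ℂ] E))ᗮ ⊓ (LinearMap.range (Q : E →ₗ[ℂ] E))ᗮ :=
      Submodule.mem_inf.mpr ⟨(mem_Pperp x).mpr hp, (mem_Qperp x).mpr hq⟩
    rw [hgen4] at hx
    simpa using hx
  -- graph characterizations
  have hβ' : graβ = {z : E × E | P z.1 = z.1 ∧ P z.2 = z.2 ∧
      Q (z.1 + Γ z.2) = z.1 + Γ z.2} := by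
    rw [hβ]; ext ⟨u, v⟩
    simp only [Set.mem_setOf_eq, Prod.mk.injEq]
    constructor
    · rintro ⟨q, hq, rfl, rfl⟩
      rw [mem_ranQ] at hq
      refine ⟨hPP q, hPP (Γ q), ?_⟩
      have e : P q + Γ (P (Γ q)) = q := by rw [hΓPΓ]; abel
      rw [e, hq]
    · rintro ⟨h1, h2, h3⟩
      refine ⟨u + Γ v, (mem_ranQ _).mpr h3, ?_, ?_⟩
      · rw [map_add, h1, hPΓ0 v h2, add_zero]
      · rw [hΓ_add, hΓ_inv, map_add, hPΓ0 u h1, zero_add, h2]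
  have hα' : graα = {z : E × E | P z.1 = z.1 ∧ P z.2 = z.2 ∧
      Q (z.1 - Γ z.2) = 0} := by
    rw [hα]; ext ⟨u, v⟩
    simp only [Set.mem_setOf_eq, Prod.mk.injEq]
    constructor
    · rintro ⟨q, hq, rfl, rfl⟩
      rw [mem_Qperp] at hq
      refine ⟨hPP q, by rw [map_neg, hPP], ?_⟩
      have e : P q - Γ (-P (Γ q)) = q := by rw [hΓ_neg, hΓPΓ]; abel
      rw [e, hq]
    · rintro ⟨h1, h2, h3⟩
      refine ⟨u - Γ v, (mem_Qperp _).mpr h3, ?_, ?_⟩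
      · rw [map_sub, h1, hPΓ0 v h2, sub_zero]
      · rw [hΓ_sub, hΓ_inv, map_sub, hPΓ0 u h1, zero_sub, neg_neg, h2]
  -- closed subspaces
  have hranP_closed : IsClosed ((LinearMap.range (P : E →ₗ[ℂ] E) : Submodule ℂ E) : Set E) := by
    have e : ((LinearMap.range (P : E →ₗ[ℂ] E) : Submodule ℂ E) : Set E) = {x | P x = x} := by
      ext x; exact mem_ranP x
    rw [e]; exact isClosed_eq P.continuous continuous_id
  have hranQ_closed : IsClosed ((LinearMap.range (Q : E →ₗ[ℂ] E) : Submodule ℂ E) : Set E) := by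
    have e : ((LinearMap.range (Q : E →ₗ[ℂ] E) : Submodule ℂ E) : Set E) = {x | Q x = x} := by
      ext x; exact mem_ranQ x
    rw [e]; exact isClosed_eq Q.continuous continuous_id
  have hcl_self : ∀ S : Submodule ℂ E, IsClosed (S : Set E) → Sᗮᗮ = S := by
    intro S hS
    rw [Submodule.orthogonal_orthogonal_eq_closure]
    exact le_antisymm (Submodule.topologicalClosure_minimal S le_rfl hS)
      (Submodule.le_topologicalClosure S)
  have hdens : ∀ T : Submodule ℂ E, Tᗮ = (LinearMap.range (P : E →ₗ[ℂ] E))ᗮ →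
      closure (T : Set E) = ((LinearMap.range (P : E →ₗ[ℂ] E) : Submodule ℂ E) : Set E) := by
    intro T hT
    rw [← Submodule.topologicalClosure_coe, ← Submodule.orthogonal_orthogonal_eq_closure,
      hT, hcl_self _ hranP_closed]
  have hTβ : (Submodule.map (P : E →ₗ[ℂ] E) (LinearMap.range (Q : E →ₗ[ℂ] E)))ᗮ = (LinearMap.range (P : E →ₗ[ℂ] E))ᗮ := by
    ext x
    rw [Submodule.mem_orthogonal, mem_Pperp x]
    constructor
    · intro h
      refine hgen2' (P x) (hPP x) ?_
      refine (mem_Qperp (P x)).mp ?_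
      rw [Submodule.mem_orthogonal]
      rintro q ⟨y, rfl⟩
      have h0 : ⟪P (Q y), x⟫ = 0 := h _ (Submodule.mem_map_of_mem ⟨y, rfl⟩)
      rwa [hPsym] at h0
    · intro h u hu
      obtain ⟨q, hq, rfl⟩ := hu
      show ⟪P q, x⟫ = 0
      rw [hPsym, h, inner_zero_right]
  have hTα : (Submodule.map (P : E →ₗ[ℂ] E) ((LinearMap.range (Q : E →ₗ[ℂ] E))ᗮ))ᗮ = (LinearMap.range (P : E →ₗ[ℂ] E))ᗮ := by
    ext x
    rw [Submodule.mem_orthogonal, mem_Pperp x]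
    constructor
    · intro h
      refine hgen1' (P x) (hPP x) ?_
      refine (mem_ranQ (P x)).mp ?_
      rw [← hcl_self _ hranQ_closed, Submodule.mem_orthogonal]
      intro w hw
      have h0 : ⟪P w, x⟫ = 0 := h _ (Submodule.mem_map_of_mem hw)
      rwa [hPsym] at h0
    · intro h u hu
      obtain ⟨q, hq, rfl⟩ := hu
      show ⟪P q, x⟫ = 0
      rw [hPsym, h, inner_zero_right]
  refine ⟨?_, ?_, ?_, ?_, ?_, ?_, ?_, ?_, ?_, ?_, ?_, ?_, ?_, ?_, ?_, ?_, ?_, ?_, ?_⟩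
  · -- β single-valued
    intro z hz w hw h1
    rw [hβ'] at hz hw
    obtain ⟨hz1, hz2, hz3⟩ := hz
    obtain ⟨hw1, hw2, hw3⟩ := hw
    have hd : Q (Γ (z.2 - w.2)) = Γ (z.2 - w.2) := by
      have e : Γ (z.2 - w.2) = (z.1 + Γ z.2) - (w.1 + Γ w.2) := by
        rw [hΓ_sub, h1]; abel
      rw [e, map_sub, hz3, hw3]
    have hp : P (Γ (z.2 - w.2)) = 0 := hPΓ0 _ (by rw [map_sub, hz2, hw2])
    have h0 := hgen3' _ hp hd
    have h0' := congrArg Γ h0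
    rw [hΓ_inv, hΓ0] at h0'
    exact sub_eq_zero.mp h0'
  · -- β injective
    intro z hz w hw h2
    rw [hβ'] at hz hw
    obtain ⟨hz1, hz2, hz3⟩ := hz
    obtain ⟨hw1, hw2, hw3⟩ := hw
    have hd : Q (z.1 - w.1) = z.1 - w.1 := by
      have e : z.1 - w.1 = (z.1 + Γ z.2) - (w.1 + Γ w.2) := by rw [h2]; abel
      rw [e, map_sub, hz3, hw3]
    have hp : P (z.1 - w.1) = z.1 - w.1 := by rw [map_sub, hz1, hw1]
    exact sub_eq_zero.mp (hgen1' _ hp hd)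
  · -- α single-valued
    intro z hz w hw h1
    rw [hα'] at hz hw
    obtain ⟨hz1, hz2, hz3⟩ := hz
    obtain ⟨hw1, hw2, hw3⟩ := hw
    have hd : Q (Γ (z.2 - w.2)) = 0 := by
      have e : Γ (z.2 - w.2) = (w.1 - Γ w.2) - (z.1 - Γ z.2) := by
        rw [hΓ_sub, h1]; abel
      rw [e, map_sub, hz3, hw3, sub_zero]
    have hp : P (Γ (z.2 - w.2)) = 0 := hPΓ0 _ (by rw [map_sub, hz2, hw2])
    have h0 := hgen4' _ hp hd
    have h0' := congrArg Γ h0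
    rw [hΓ_inv, hΓ0] at h0'
    exact sub_eq_zero.mp h0'
  · -- α injective
    intro z hz w hw h2
    rw [hα'] at hz hw
    obtain ⟨hz1, hz2, hz3⟩ := hz
    obtain ⟨hw1, hw2, hw3⟩ := hw
    have hd : Q (z.1 - w.1) = 0 := by
      have e : z.1 - w.1 = (z.1 - Γ z.2) - (w.1 - Γ w.2) := by rw [h2]; abel
      rw [e, map_sub, hz3, hw3, sub_zero]
    have hp : P (z.1 - w.1) = z.1 - w.1 := by rw [map_sub, hz1, hw1]
    exact sub_eq_zero.mp (hgen2' _ hp hd)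
  · -- β additive
    intro z hz w hw
    rw [hβ'] at hz hw ⊢
    obtain ⟨hz1, hz2, hz3⟩ := hz
    obtain ⟨hw1, hw2, hw3⟩ := hw
    refine ⟨?_, ?_, ?_⟩
    · simp only [Prod.fst_add, map_add, hz1, hw1]
    · simp only [Prod.snd_add, map_add, hz2, hw2]
    · have e : (z + w).1 + Γ (z + w).2 = (z.1 + Γ z.2) + (w.1 + Γ w.2) := by
        simp only [Prod.fst_add, Prod.snd_add, hΓ_add]; abel
      rw [e, map_add, hz3, hw3]
  · -- β conj-homogeneous
    intro z hz c
    rw [hβ'] at hz ⊢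
    obtain ⟨hz1, hz2, hz3⟩ := hz
    refine ⟨?_, ?_, ?_⟩
    · show P (c • z.1) = c • z.1
      rw [map_smul, hz1]
    · show P ((starRingEnd ℂ) c • z.2) = (starRingEnd ℂ) c • z.2
      rw [map_smul, hz2]
    · show Q (c • z.1 + Γ ((starRingEnd ℂ) c • z.2)) = c • z.1 + Γ ((starRingEnd ℂ) c • z.2)
      have e : c • z.1 + Γ ((starRingEnd ℂ) c • z.2) = c • (z.1 + Γ z.2) := by
        rw [hΓ_smul, Complex.conj_conj, smul_add]
      rw [e, map_smul, hz3]
  · -- α additive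
    intro z hz w hw
    rw [hα'] at hz hw ⊢
    obtain ⟨hz1, hz2, hz3⟩ := hz
    obtain ⟨hw1, hw2, hw3⟩ := hw
    refine ⟨?_, ?_, ?_⟩
    · simp only [Prod.fst_add, map_add, hz1, hw1]
    · simp only [Prod.snd_add, map_add, hz2, hw2]
    · have e : (z + w).1 - Γ (z + w).2 = (z.1 - Γ z.2) + (w.1 - Γ w.2) := by
        simp only [Prod.fst_add, Prod.snd_add, hΓ_add]; abel
      rw [e, map_add, hz3, hw3, add_zero]
  · -- α conj-homogeneous
    intro z hz c
    rw [hα'] at hz ⊢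
    obtain ⟨hz1, hz2, hz3⟩ := hz
    refine ⟨?_, ?_, ?_⟩
    · show P (c • z.1) = c • z.1
      rw [map_smul, hz1]
    · show P ((starRingEnd ℂ) c • z.2) = (starRingEnd ℂ) c • z.2
      rw [map_smul, hz2]
    · show Q (c • z.1 - Γ ((starRingEnd ℂ) c • z.2)) = 0
      have e : c • z.1 - Γ ((starRingEnd ℂ) c • z.2) = c • (z.1 - Γ z.2) := by
        rw [hΓ_smul, Complex.conj_conj, smul_sub]
      rw [e, map_smul, hz3, smul_zero]
  · -- graβ closed
    rw [hβ']
    have e : {z : E × E | P z.1 = z.1 ∧ P z.2 = z.2 ∧ Q (z.1 + Γ z.2) = z.1 + Γ z.2}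
        = ({z : E × E | P z.1 = z.1} ∩ {z : E × E | P z.2 = z.2}) ∩
          {z : E × E | Q (z.1 + Γ z.2) = z.1 + Γ z.2} := by
      ext z; simp [Set.mem_inter_iff, and_assoc]
    rw [e]
    have c1 : Continuous fun z : E × E => z.1 + Γ z.2 :=
      continuous_fst.add (hΓ_cont.comp continuous_snd)
    exact ((isClosed_eq (P.continuous.comp continuous_fst) continuous_fst).inter
      (isClosed_eq (P.continuous.comp continuous_snd) continuous_snd)).inter
      (isClosed_eq (Q.continuous.comp c1) c1)
  · -- graα closed
    rw [hα']
    have e : {z : E × E | P z.1 = z.1 ∧ P z.2 = z.2 ∧ Q (z.1 - Γ z.2) = 0}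
        = ({z : E × E | P z.1 = z.1} ∩ {z : E × E | P z.2 = z.2}) ∩
          {z : E × E | Q (z.1 - Γ z.2) = 0} := by
      ext z; simp [Set.mem_inter_iff, and_assoc]
    rw [e]
    have c1 : Continuous fun z : E × E => z.1 - Γ z.2 :=
      continuous_fst.sub (hΓ_cont.comp continuous_snd)
    exact ((isClosed_eq (P.continuous.comp continuous_fst) continuous_fst).inter
      (isClosed_eq (P.continuous.comp continuous_snd) continuous_snd)).inter
      (isClosed_eq (Q.continuous.comp c1) continuous_const)
  · -- fst '' graβ
    rw [hβ]; ext x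
    simp only [Set.mem_image, Set.mem_setOf_eq, SetLike.mem_coe]
    constructor
    · rintro ⟨z, ⟨q, hq, rfl⟩, rfl⟩
      exact ⟨q, hq, rfl⟩
    · rintro ⟨q, hq, rfl⟩
      exact ⟨(P q, P (Γ q)), ⟨q, hq, rfl⟩, rfl⟩
  · -- snd '' graβ
    rw [hβ]; ext x
    simp only [Set.mem_image, Set.mem_setOf_eq, SetLike.mem_coe]
    constructor
    · rintro ⟨z, ⟨q, hq, rfl⟩, rfl⟩
      refine ⟨Γ q, ?_, rfl⟩
      rw [mem_ranQ] at hq ⊢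
      rw [hQΓ, hq]
    · rintro ⟨q, hq, rfl⟩
      refine ⟨(P (Γ q), P q), ⟨Γ q, ?_, ?_⟩, rfl⟩
      · rw [mem_ranQ] at hq ⊢
        rw [hQΓ, hq]
      · rw [hΓ_inv]
  · -- fst '' graα
    rw [hα]; ext x
    simp only [Set.mem_image, Set.mem_setOf_eq, SetLike.mem_coe]
    constructor
    · rintro ⟨z, ⟨q, hq, rfl⟩, rfl⟩
      exact ⟨q, hq, rfl⟩
    · rintro ⟨q, hq, rfl⟩
      exact ⟨(P q, -P (Γ q)), ⟨q, hq, rfl⟩, rfl⟩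
  · -- snd '' graα
    rw [hα]; ext x
    simp only [Set.mem_image, Set.mem_setOf_eq, SetLike.mem_coe]
    constructor
    · rintro ⟨z, ⟨q, hq, rfl⟩, rfl⟩
      refine ⟨Γ (-q), ?_, ?_⟩
      · rw [mem_Qperp] at hq ⊢
        rw [hQΓ, map_neg, hq, neg_zero, hΓ0]
      · show P (Γ (-q)) = -P (Γ q)
        rw [hΓ_neg, map_neg]
    · rintro ⟨q, hq, rfl⟩
      refine ⟨(P (-Γ q), P q), ⟨-Γ q, ?_, ?_⟩, rfl⟩
      · rw [mem_Qperp] at hq ⊢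
        rw [map_neg, hQΓ, hq, hΓ0, neg_zero]
      · have e : Γ (-Γ q) = -q := by rw [hΓ_neg, hΓ_inv]
        rw [e]; simp
  · -- density of dom β
    have e : P '' (LinearMap.range (Q : E →ₗ[ℂ] E) : Set E)
        = ((Submodule.map (P : E →ₗ[ℂ] E) (LinearMap.range (Q : E →ₗ[ℂ] E)) : Submodule ℂ E) : Set E) := by
      rw [Submodule.map_coe]; rfl
    rw [e, hdens _ hTβ]
  · -- density of dom α
    have e : P '' ((LinearMap.range (Q : E →ₗ[ℂ] E))ᗮ : Set E)
        = ((Submodule.map (P : E →ₗ[ℂ] E) ((LinearMap.range (Q : E →ₗ[ℂ] E))ᗮ) : Submodule ℂ E) : Set E) := by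
      rw [Submodule.map_coe]; rfl
    rw [e, hdens _ hTα]
  · -- β² = id
    intro z hz
    rw [hβ'] at hz ⊢
    obtain ⟨hz1, hz2, hz3⟩ := hz
    refine ⟨hz2, hz1, ?_⟩
    have e : z.2 + Γ z.1 = Γ (z.1 + Γ z.2) := by rw [hΓ_add, hΓ_inv]; abel
    show Q (z.2 + Γ z.1) = z.2 + Γ z.1
    rw [e, hQΓ, hz3]
  · -- α² = id
    intro z hz
    rw [hα'] at hz ⊢
    obtain ⟨hz1, hz2, hz3⟩ := hz
    refine ⟨hz2, hz1, ?_⟩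
    have e : z.2 - Γ z.1 = -Γ (z.1 - Γ z.2) := by rw [hΓ_sub, hΓ_inv]; abel
    show Q (z.2 - Γ z.1) = 0
    rw [e, map_neg, hQΓ, hz3, hΓ0, neg_zero]
  · -- α = β*
    rw [hα']
    ext ⟨u, v⟩
    simp only [Set.mem_setOf_eq]
    constructor
    · rintro ⟨h1, h2, h3⟩
      refine ⟨(mem_ranP u).mpr h1, (mem_ranP v).mpr h2, ?_⟩
      intro w hw
      rw [hβ'] at hw
      obtain ⟨g1, g2, g3⟩ := hw
      have hΓq : Q (Γ w.1 + w.2) = Γ w.1 + w.2 := by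
        have e : Γ w.1 + w.2 = Γ (w.1 + Γ w.2) := by rw [hΓ_add, hΓ_inv]
        rw [e, hQΓ, g3]
      have hmem : u - Γ v ∈ (LinearMap.range (Q : E →ₗ[ℂ] E))ᗮ := (mem_Qperp _).mpr h3
      have horth : ⟪Γ w.1 + w.2, u - Γ v⟫ = 0 :=
        (Submodule.mem_orthogonal _ _).mp hmem _ ⟨Γ w.1 + w.2, hΓq⟩
      have e1 : ⟪Γ w.1, u⟫ = 0 := by
        rw [← h1, ← hPsym, hPΓ0 w.1 g1, inner_zero_left]
      have e2 : ⟪Γ w.1, Γ v⟫ = ⟪v, w.1⟫ := hΓ_inner w.1 v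
      have e3 : ⟪w.2, Γ v⟫ = 0 := by
        rw [← g2, hPsym, hPΓ0 v h2, inner_zero_right]
      rw [inner_add_left, inner_sub_right, inner_sub_right, e1, e2, e3] at horth
      have key : ⟪w.2, u⟫ = ⟪v, w.1⟫ := by
        have := horth
        ring_nf at this
        linear_combination this
      have h' := congrArg (starRingEnd ℂ) key
      simpa [inner_conj_symm] using h'
    · rintro ⟨hu, hv, hadj⟩
      have hu' : P u = u := (mem_ranP u).mp hu
      have hv' : P v = v := (mem_ranP v).mp hv
      refine ⟨hu', hv', ?_⟩
      refine (mem_Qperp _).mp ?_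
      rw [Submodule.mem_orthogonal]
      intro q hq'
      have hq : Q q = q := (mem_ranQ q).mp hq'
      have hw : (P (Γ q), P q) ∈ graβ := by
        rw [hβ]
        refine ⟨Γ q, (mem_ranQ _).mpr (by rw [hQΓ, hq]), ?_⟩
        rw [hΓ_inv]
      have h5 := hadj _ hw
      have e1 : ⟪u, P q⟫ = ⟪u, q⟫ := by rw [← hPsym, hu']
      have e2 : ⟪P (Γ q), v⟫ = ⟪Γ q, v⟫ := by rw [hPsym, hv']
      rw [e1, e2] at h5
      have e3 : ⟪q, Γ v⟫ = ⟪v, Γ q⟫ := by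
        conv_lhs => rw [← hΓ_inv q]
        exact hΓ_inner (Γ q) v
      have e4 : ⟪q, u⟫ = ⟪v, Γ q⟫ := by
        have h6 := congrArg (starRingEnd ℂ) h5
        simpa [inner_conj_symm] using h6
      rw [inner_sub_right, e3, e4, sub_self]
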